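/- arXiv:math/9812030 — 2 statements merged into one kernel-verified Lean document; each statement's English description precedes it below -/
import Mathlib

section
/- Let M, U, V : ℝ² → ℝ be smooth functions of (θ, v) satisfying the plane-polarized colliding plane wave evolution equations U_{θv} = U_θ U_v, V_{θv} = ½(U_θ V_v + U_v V_θ), and M_{θv} = ½(−U_θ U_v + V_θ V_v), and let G = U_{vv} − ½(U_v² + V_v²) + U_v M_v. Then ∂_θ(G e^{-U}) = 0, and consequently for all θ₋, θ₊, v one has the jump condition G(θ₊, v) = G(θ₋, v) e^{U(θ₊,v) − U(θ₋,v)}. In particular, if G(θ₀, ·) ≡ 0 for some θ₀ then G ≡ 0. -/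
open Real

/-- Partial derivative with respect to the first variable `θ`. -/
noncomputable def pd1 (F : ℝ → ℝ → ℝ) : ℝ → ℝ → ℝ := fun θ v => deriv (fun t => F t v) θ

/-- Partial derivative with respect to the second variable `v`. -/
noncomputable def pd2 (F : ℝ → ℝ → ℝ) : ℝ → ℝ → ℝ := fun θ v => deriv (fun s => F θ s) v

/-- Directional derivative of an uncurried function in the first direction. -/
noncomputable def d1 (P : ℝ × ℝ → ℝ) : ℝ × ℝ → ℝ := fun p => fderiv ℝ P p (1, 0)

/-- Directional derivative of an uncurried function in the second direction. -/
noncomputable def d2 (P : ℝ × ℝ → ℝ) : ℝ × ℝ → ℝ := fun p => fderiv ℝ P p (0, 1)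

lemma slice1 (P : ℝ × ℝ → ℝ) (hP : Differentiable ℝ P) (θ v : ℝ) :
    HasDerivAt (fun t => P (t, v)) (d1 P (θ, v)) θ :=
  (hP (θ, v)).hasFDerivAt.comp_hasDerivAt θ ((hasDerivAt_id θ).prodMk (hasDerivAt_const θ v))

lemma slice2 (P : ℝ × ℝ → ℝ) (hP : Differentiable ℝ P) (θ v : ℝ) :
    HasDerivAt (fun s => P (θ, s)) (d2 P (θ, v)) v :=
  (hP (θ, v)).hasFDerivAt.comp_hasDerivAt v ((hasDerivAt_const v θ).prodMk (hasDerivAt_id v))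

lemma contDiff_d1 (P : ℝ × ℝ → ℝ) (hP : ContDiff ℝ (⊤ : ℕ∞) P) :
    ContDiff ℝ (⊤ : ℕ∞) (d1 P) :=
  (ContinuousLinearMap.apply ℝ ℝ ((1 : ℝ), (0 : ℝ))).contDiff.comp (hP.fderiv_right (by exact_mod_cast le_top))

lemma contDiff_d2 (P : ℝ × ℝ → ℝ) (hP : ContDiff ℝ (⊤ : ℕ∞) P) :
    ContDiff ℝ (⊤ : ℕ∞) (d2 P) :=
  (ContinuousLinearMap.apply ℝ ℝ ((0 : ℝ), (1 : ℝ))).contDiff.comp (hP.fderiv_right (by exact_mod_cast le_top))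

lemma clairaut (P : ℝ × ℝ → ℝ) (hP : ContDiff ℝ (⊤ : ℕ∞) P) (p : ℝ × ℝ) :
    d1 (d2 P) p = d2 (d1 P) p := by
  have hdiff : Differentiable ℝ P := hP.differentiable (by simp)
  have hf' : ContDiff ℝ (⊤ : ℕ∞) (fderiv ℝ P) := hP.fderiv_right (by exact_mod_cast le_top)
  have h'' : HasFDerivAt (fderiv ℝ P) (fderiv ℝ (fderiv ℝ P) p) p :=
    (hf'.differentiable (by simp) p).hasFDerivAt
  have hsymm := second_derivative_symmetric (f := P)
    (fun y => (hdiff y).hasFDerivAt) h'' ((1 : ℝ), (0 : ℝ)) ((0 : ℝ), (1 : ℝ))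
  have key : ∀ w : ℝ × ℝ, HasFDerivAt (fun q => fderiv ℝ P q w)
      ((ContinuousLinearMap.apply ℝ ℝ w).comp (fderiv ℝ (fderiv ℝ P) p)) p :=
    fun w => (ContinuousLinearMap.apply ℝ ℝ w).hasFDerivAt.comp p h''
  have e1 : d1 (d2 P) p = fderiv ℝ (fderiv ℝ P) p (1, 0) (0, 1) := by
    show fderiv ℝ (fun q => fderiv ℝ P q (0, 1)) p (1, 0) = _
    rw [(key (0, 1)).fderiv]; rfl
  have e2 : d2 (d1 P) p = fderiv ℝ (fderiv ℝ P) p (0, 1) (1, 0) := by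
    show fderiv ℝ (fun q => fderiv ℝ P q (1, 0)) p (0, 1) = _
    rw [(key (1, 0)).fderiv]; rfl
  rw [e1, e2, hsymm]

lemma d2_mul (f g : ℝ × ℝ → ℝ) (hf : Differentiable ℝ f) (hg : Differentiable ℝ g)
    (p : ℝ × ℝ) :
    d2 (fun q => f q * g q) p = d2 f p * g p + f p * d2 g p := by
  have h := ((hf p).hasFDerivAt.mul (hg p).hasFDerivAt).fderiv
  show fderiv ℝ (fun q => f q * g q) p (0, 1) = _
  rw [show (fun q => f q * g q) = f * g from rfl, h]
  simp [d2]
  ring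

lemma pd1_of_eq (H : ℝ → ℝ → ℝ) (Q : ℝ × ℝ → ℝ) (hQ : Differentiable ℝ Q)
    (h : ∀ θ v, H θ v = Q (θ, v)) (θ v : ℝ) : pd1 H θ v = d1 Q (θ, v) := by
  have hfun : (fun t => H t v) = fun t => Q (t, v) := funext fun t => h t v
  show deriv (fun t => H t v) θ = _
  rw [hfun]
  exact (slice1 Q hQ θ v).deriv

lemma pd2_of_eq (H : ℝ → ℝ → ℝ) (Q : ℝ × ℝ → ℝ) (hQ : Differentiable ℝ Q)
    (h : ∀ θ v, H θ v = Q (θ, v)) (θ v : ℝ) : pd2 H θ v = d2 Q (θ, v) := by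
  have hfun : (fun s => H θ s) = fun s => Q (θ, s) := funext fun s => h θ s
  show deriv (fun s => H θ s) v = _
  rw [hfun]
  exact (slice2 Q hQ θ v).deriv

/-- For smooth solutions of the plane-polarized colliding plane wave evolution equations,
with `G = U_{vv} − ½(U_v² + V_v²) + U_v M_v`, one has `∂_θ(G e^{-U}) = 0`, hence the jump
condition `G(θ₊,v) = G(θ₋,v) e^{U(θ₊,v) − U(θ₋,v)}`; in particular if `G(θ₀,·) ≡ 0` for
some `θ₀` then `G ≡ 0`. -/
theorem v_constraint_jump
    (M U V : ℝ → ℝ → ℝ)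
    (hM : ContDiff ℝ (⊤ : ℕ∞) (fun p : ℝ × ℝ => M p.1 p.2))
    (hU : ContDiff ℝ (⊤ : ℕ∞) (fun p : ℝ × ℝ => U p.1 p.2))
    (hV : ContDiff ℝ (⊤ : ℕ∞) (fun p : ℝ × ℝ => V p.1 p.2))
    (e1 : ∀ θ v, pd2 (pd1 U) θ v = pd1 U θ v * pd2 U θ v)
    (e2 : ∀ θ v, pd2 (pd1 V) θ v
        = (1/2) * (pd1 U θ v * pd2 V θ v + pd2 U θ v * pd1 V θ v))
    (e3 : ∀ θ v, pd2 (pd1 M) θ v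
        = (1/2) * (-(pd1 U θ v * pd2 U θ v) + pd1 V θ v * pd2 V θ v))
    (G : ℝ → ℝ → ℝ)
    (hG : ∀ θ v, G θ v = pd2 (pd2 U) θ v
        - (1/2) * ((pd2 U θ v)^2 + (pd2 V θ v)^2) + pd2 U θ v * pd2 M θ v) :
    (∀ θ v, pd1 (fun t s => G t s * Real.exp (-(U t s))) θ v = 0)
    ∧ (∀ θm θp v, G θp v = G θm v * Real.exp (U θp v - U θm v))
    ∧ (∀ θ₀, (∀ v, G θ₀ v = 0) → ∀ θ v, G θ v = 0) := by
  set PU : ℝ × ℝ → ℝ := fun p => U p.1 p.2 with hPUdef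
  set PV : ℝ × ℝ → ℝ := fun p => V p.1 p.2 with hPVdef
  set PM : ℝ × ℝ → ℝ := fun p => M p.1 p.2 with hPMdef
  have hu1 : ContDiff ℝ (⊤ : ℕ∞) (d1 PU) := contDiff_d1 _ hU
  have hu2 : ContDiff ℝ (⊤ : ℕ∞) (d2 PU) := contDiff_d2 _ hU
  have hv1 : ContDiff ℝ (⊤ : ℕ∞) (d1 PV) := contDiff_d1 _ hV
  have hv2 : ContDiff ℝ (⊤ : ℕ∞) (d2 PV) := contDiff_d2 _ hV
  have hm1 : ContDiff ℝ (⊤ : ℕ∞) (d1 PM) := contDiff_d1 _ hM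
  have hm2 : ContDiff ℝ (⊤ : ℕ∞) (d2 PM) := contDiff_d2 _ hM
  have hu22 : ContDiff ℝ (⊤ : ℕ∞) (d2 (d2 PU)) := contDiff_d2 _ hu2
  have cu1 : ∀ θ v, pd1 U θ v = d1 PU (θ, v) :=
    pd1_of_eq U PU (hU.differentiable (by simp)) (fun _ _ => rfl)
  have cu2 : ∀ θ v, pd2 U θ v = d2 PU (θ, v) :=
    pd2_of_eq U PU (hU.differentiable (by simp)) (fun _ _ => rfl)
  have cv1 : ∀ θ v, pd1 V θ v = d1 PV (θ, v) :=
    pd1_of_eq V PV (hV.differentiable (by simp)) (fun _ _ => rfl)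
  have cv2 : ∀ θ v, pd2 V θ v = d2 PV (θ, v) :=
    pd2_of_eq V PV (hV.differentiable (by simp)) (fun _ _ => rfl)
  have cm1 : ∀ θ v, pd1 M θ v = d1 PM (θ, v) :=
    pd1_of_eq M PM (hM.differentiable (by simp)) (fun _ _ => rfl)
  have cm2 : ∀ θ v, pd2 M θ v = d2 PM (θ, v) :=
    pd2_of_eq M PM (hM.differentiable (by simp)) (fun _ _ => rfl)
  have c12U : ∀ θ v, pd2 (pd1 U) θ v = d2 (d1 PU) (θ, v) :=
    pd2_of_eq (pd1 U) (d1 PU) (hu1.differentiable (by simp)) cu1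
  have c12V : ∀ θ v, pd2 (pd1 V) θ v = d2 (d1 PV) (θ, v) :=
    pd2_of_eq (pd1 V) (d1 PV) (hv1.differentiable (by simp)) cv1
  have c12M : ∀ θ v, pd2 (pd1 M) θ v = d2 (d1 PM) (θ, v) :=
    pd2_of_eq (pd1 M) (d1 PM) (hm1.differentiable (by simp)) cm1
  have c22U : ∀ θ v, pd2 (pd2 U) θ v = d2 (d2 PU) (θ, v) :=
    pd2_of_eq (pd2 U) (d2 PU) (hu2.differentiable (by simp)) cu2
  have E1 : ∀ p : ℝ × ℝ, d2 (d1 PU) p = d1 PU p * d2 PU p := by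
    rintro ⟨θ, v⟩
    rw [← c12U, e1, cu1, cu2]
  have E2 : ∀ p : ℝ × ℝ, d2 (d1 PV) p
      = (1/2) * (d1 PU p * d2 PV p + d2 PU p * d1 PV p) := by
    rintro ⟨θ, v⟩
    rw [← c12V, e2, cu1, cu2, cv1, cv2]
  have E3 : ∀ p : ℝ × ℝ, d2 (d1 PM) p
      = (1/2) * (-(d1 PU p * d2 PU p) + d1 PV p * d2 PV p) := by
    rintro ⟨θ, v⟩
    rw [← c12M, e3, cu1, cu2, cv1, cv2]
  have K2 : ∀ p : ℝ × ℝ, d1 (d2 PU) p = d1 PU p * d2 PU p :=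
    fun p => (clairaut PU hU p).trans (E1 p)
  have Kv2 : ∀ p : ℝ × ℝ, d1 (d2 PV) p
      = (1/2) * (d1 PU p * d2 PV p + d2 PU p * d1 PV p) :=
    fun p => (clairaut PV hV p).trans (E2 p)
  have Km2 : ∀ p : ℝ × ℝ, d1 (d2 PM) p
      = (1/2) * (-(d1 PU p * d2 PU p) + d1 PV p * d2 PV p) :=
    fun p => (clairaut PM hM p).trans (E3 p)
  have K22 : ∀ p : ℝ × ℝ, d1 (d2 (d2 PU)) p
      = d1 PU p * d2 PU p * d2 PU p + d1 PU p * d2 (d2 PU) p := by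
    intro p
    have h1 : d1 (d2 (d2 PU)) p = d2 (d1 (d2 PU)) p := clairaut (d2 PU) hu2 p
    have h2 : d1 (d2 PU) = fun q => d1 PU q * d2 PU q := funext K2
    rw [h1, h2, d2_mul _ _ (hu1.differentiable (by simp)) (hu2.differentiable (by simp)) p, E1]
  have key : ∀ θ v, HasDerivAt (fun t => G t v * Real.exp (-(U t v))) 0 θ := by
    intro θ v
    have h22 := slice1 (d2 (d2 PU)) (hu22.differentiable (by simp)) θ v
    have h2 := slice1 (d2 PU) (hu2.differentiable (by simp)) θ v
    have hv2s := slice1 (d2 PV) (hv2.differentiable (by simp)) θ v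
    have hm2s := slice1 (d2 PM) (hm2.differentiable (by simp)) θ v
    have hfun : (fun t => G t v)
        = fun t => d2 (d2 PU) (t, v)
            - (1/2) * ((d2 PU (t, v))^2 + (d2 PV (t, v))^2)
            + d2 PU (t, v) * d2 PM (t, v) := by
      funext t
      rw [hG, c22U, cu2, cv2, cm2]
    have hGslice : HasDerivAt (fun t => G t v) (d1 PU (θ, v) * G θ v) θ := by
      rw [hfun]
      have h := (h22.sub ((((h2.pow 2)).add (hv2s.pow 2)).const_mul (1/2))).add
        (h2.mul hm2s)
      refine h.congr_deriv ?_
      rw [hG, c22U, cu2, cv2, cm2, K22, K2, Kv2, Km2]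
      ring
    have hUslice : HasDerivAt (fun t => U t v) (d1 PU (θ, v)) θ :=
      slice1 PU (hU.differentiable (by simp)) θ v
    have hexp : HasDerivAt (fun t => Real.exp (-(U t v)))
        (Real.exp (-(U θ v)) * (-(d1 PU (θ, v)))) θ := hUslice.neg.exp
    have hmul := hGslice.mul hexp
    refine hmul.congr_deriv ?_
    ring
  have jump : ∀ θm θp v, G θp v = G θm v * Real.exp (U θp v - U θm v) := by
    intro θm θp v
    have hdiff : Differentiable ℝ (fun t => G t v * Real.exp (-(U t v))) :=
      fun x => (key x v).differentiableAt
    have hconst := is_const_of_deriv_eq_zero hdiff (fun x => (key x v).deriv) θp θm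
    rw [Real.exp_neg, Real.exp_neg] at hconst
    rw [Real.exp_sub]
    have hne : Real.exp (U θm v) ≠ 0 := Real.exp_ne_zero _
    have hne2 : Real.exp (U θp v) ≠ 0 := Real.exp_ne_zero _
    field_simp at hconst ⊢
    linear_combination hconst
  refine ⟨?_, jump, ?_⟩
  · intro θ v
    exact (key θ v).deriv
  · intro θ₀ h0 θ v
    rw [jump θ₀ θ v, h0 v, zero_mul]
end

section
/- Let M, U, V : ℝ² → ℝ be smooth functions of (θ, v) satisfying the plane-polarized colliding plane wave evolution equations U_{θv} = U_θ U_v, V_{θv} = ½(U_θ V_v + U_v V_θ), and M_{θv} = ½(−U_θ U_v + V_θ V_v). Define the θ-constraint function H = U_{θθ} − ½(U_θ² + V_θ²) + U_θ M_θ. Then H satisfies the propagation equation H_v = U_v H; in particular, if H vanishes on a line v = v₀, then H vanishes identically, so the θ-constraint is preserved by the evolution equations. -/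
open Real

section Helpers

variable {F : ℝ → ℝ → ℝ}

/-- abbreviation for the uncurried function -/
def unc (F : ℝ → ℝ → ℝ) : ℝ × ℝ → ℝ := fun p => F p.1 p.2

lemma hasDerivAt_sect1' (hF : ContDiff ℝ (⊤ : ℕ∞) (unc F)) (θ v : ℝ) :
    HasDerivAt (fun t => F t v) (fderiv ℝ (unc F) (θ, v) (1, 0)) θ := by
  have h1 : HasFDerivAt (unc F) (fderiv ℝ (unc F) (θ, v)) (θ, v) :=
    ((hF.differentiable (by simp)) (θ, v)).hasFDerivAt
  have h2 : HasDerivAt (fun t : ℝ => (t, v)) ((1 : ℝ), (0 : ℝ)) θ :=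
    HasDerivAt.prodMk (hasDerivAt_id θ) (hasDerivAt_const θ v)
  exact h1.comp_hasDerivAt θ h2

lemma hasDerivAt_sect2' (hF : ContDiff ℝ (⊤ : ℕ∞) (unc F)) (θ v : ℝ) :
    HasDerivAt (fun s => F θ s) (fderiv ℝ (unc F) (θ, v) (0, 1)) v := by
  have h1 : HasFDerivAt (unc F) (fderiv ℝ (unc F) (θ, v)) (θ, v) :=
    ((hF.differentiable (by simp)) (θ, v)).hasFDerivAt
  have h2 : HasDerivAt (fun s : ℝ => (θ, s)) ((0 : ℝ), (1 : ℝ)) v :=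
    HasDerivAt.prodMk (hasDerivAt_const v θ) (hasDerivAt_id v)
  exact h1.comp_hasDerivAt v h2

lemma pd1_eq (hF : ContDiff ℝ (⊤ : ℕ∞) (unc F)) (θ v : ℝ) :
    pd1 F θ v = fderiv ℝ (unc F) (θ, v) (1, 0) :=
  (hasDerivAt_sect1' hF θ v).deriv

lemma pd2_eq (hF : ContDiff ℝ (⊤ : ℕ∞) (unc F)) (θ v : ℝ) :
    pd2 F θ v = fderiv ℝ (unc F) (θ, v) (0, 1) :=
  (hasDerivAt_sect2' hF θ v).deriv

lemma hasDerivAt_pd1 (hF : ContDiff ℝ (⊤ : ℕ∞) (unc F)) (θ v : ℝ) :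
    HasDerivAt (fun t => F t v) (pd1 F θ v) θ := by
  rw [pd1_eq hF]; exact hasDerivAt_sect1' hF θ v

lemma hasDerivAt_pd2 (hF : ContDiff ℝ (⊤ : ℕ∞) (unc F)) (θ v : ℝ) :
    HasDerivAt (fun s => F θ s) (pd2 F θ v) v := by
  rw [pd2_eq hF]; exact hasDerivAt_sect2' hF θ v

lemma contDiff_pd1 (hF : ContDiff ℝ (⊤ : ℕ∞) (unc F)) :
    ContDiff ℝ (⊤ : ℕ∞) (unc (pd1 F)) := by
  have h : ContDiff ℝ (⊤ : ℕ∞) (fun p : ℝ × ℝ => fderiv ℝ (unc F) p (1, 0)) :=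
    (hF.fderiv_right (by exact_mod_cast le_top)).clm_apply contDiff_const
  convert h using 1
  funext p
  exact pd1_eq hF p.1 p.2

lemma contDiff_pd2 (hF : ContDiff ℝ (⊤ : ℕ∞) (unc F)) :
    ContDiff ℝ (⊤ : ℕ∞) (unc (pd2 F)) := by
  have h : ContDiff ℝ (⊤ : ℕ∞) (fun p : ℝ × ℝ => fderiv ℝ (unc F) p (0, 1)) :=
    (hF.fderiv_right (by exact_mod_cast le_top)).clm_apply contDiff_const
  convert h using 1
  funext p
  exact pd2_eq hF p.1 p.2

lemma clairaut_s6 (hF : ContDiff ℝ (⊤ : ℕ∞) (unc F)) (θ v : ℝ) :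
    pd2 (pd1 F) θ v = pd1 (pd2 F) θ v := by
  set f := unc F with hf
  have hdf : ContDiff ℝ (⊤ : ℕ∞) (fderiv ℝ f) := hF.fderiv_right (by exact_mod_cast le_top)
  have hf'' : HasFDerivAt (fderiv ℝ f) (fderiv ℝ (fderiv ℝ f) (θ, v)) (θ, v) :=
    ((hdf.differentiable (by simp)) (θ, v)).hasFDerivAt
  have hsymm :=
    second_derivative_symmetric (f := f) (f' := fderiv ℝ f)
      (fun y => ((hF.differentiable (by simp)) y).hasFDerivAt) hf''
      ((0 : ℝ), (1 : ℝ)) ((1 : ℝ), (0 : ℝ))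
  -- pd2 (pd1 F) θ v = f'' (0,1) (1,0)
  have h1 : HasDerivAt (fun s => pd1 F θ s)
      ((fderiv ℝ (fderiv ℝ f) (θ, v) ((0 : ℝ), (1 : ℝ))) (1, 0)) v := by
    have hc : HasFDerivAt (fun p => fderiv ℝ f p ((1 : ℝ), (0 : ℝ)))
        ((fderiv ℝ (fderiv ℝ f) (θ, v)).flip ((1 : ℝ), (0 : ℝ))) (θ, v) := by
      have := hf''.clm_apply (hasFDerivAt_const ((1 : ℝ), (0 : ℝ)) (θ, v))
      simpa using this
    have h2 : HasDerivAt (fun s : ℝ => (θ, s)) ((0 : ℝ), (1 : ℝ)) v :=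
      HasDerivAt.prodMk (hasDerivAt_const v θ) (hasDerivAt_id v)
    have h3 := hc.comp_hasDerivAt v h2
    have heq : (fun s => pd1 F θ s) = fun s => fderiv ℝ f (θ, s) ((1 : ℝ), (0 : ℝ)) :=
      funext fun s => pd1_eq hF θ s
    rw [heq]
    exact h3
  have h4 : HasDerivAt (fun t => pd2 F t v)
      ((fderiv ℝ (fderiv ℝ f) (θ, v) ((1 : ℝ), (0 : ℝ))) (0, 1)) θ := by
    have hc : HasFDerivAt (fun p => fderiv ℝ f p ((0 : ℝ), (1 : ℝ)))
        ((fderiv ℝ (fderiv ℝ f) (θ, v)).flip ((0 : ℝ), (1 : ℝ))) (θ, v) := by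
      have := hf''.clm_apply (hasFDerivAt_const ((0 : ℝ), (1 : ℝ)) (θ, v))
      simpa using this
    have h2 : HasDerivAt (fun t : ℝ => (t, v)) ((1 : ℝ), (0 : ℝ)) θ :=
      HasDerivAt.prodMk (hasDerivAt_id θ) (hasDerivAt_const θ v)
    have h3 := hc.comp_hasDerivAt θ h2
    have heq : (fun t => pd2 F t v) = fun t => fderiv ℝ f (t, v) ((0 : ℝ), (1 : ℝ)) :=
      funext fun t => pd2_eq hF t v
    rw [heq]
    exact h3
  show deriv (fun s => pd1 F θ s) v = deriv (fun t => pd2 F t v) θ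
  rw [h1.deriv, h4.deriv]
  exact hsymm

end Helpers

/-- For smooth solutions of the plane-polarized colliding plane wave evolution equations,
the `θ`-constraint function `H = U_{θθ} − ½(U_θ² + V_θ²) + U_θ M_θ` satisfies
`H_v = U_v H`; in particular, if `H` vanishes on a line `v = v₀` then `H ≡ 0`:
the `θ`-constraint is preserved by the evolution. -/
theorem theta_constraint_preserved
    (M U V : ℝ → ℝ → ℝ)
    (hM : ContDiff ℝ (⊤ : ℕ∞) (fun p : ℝ × ℝ => M p.1 p.2))
    (hU : ContDiff ℝ (⊤ : ℕ∞) (fun p : ℝ × ℝ => U p.1 p.2))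
    (hV : ContDiff ℝ (⊤ : ℕ∞) (fun p : ℝ × ℝ => V p.1 p.2))
    (e1 : ∀ θ v, pd2 (pd1 U) θ v = pd1 U θ v * pd2 U θ v)
    (e2 : ∀ θ v, pd2 (pd1 V) θ v
        = (1/2) * (pd1 U θ v * pd2 V θ v + pd2 U θ v * pd1 V θ v))
    (e3 : ∀ θ v, pd2 (pd1 M) θ v
        = (1/2) * (-(pd1 U θ v * pd2 U θ v) + pd1 V θ v * pd2 V θ v))
    (H : ℝ → ℝ → ℝ)
    (hH : ∀ θ v, H θ v = pd1 (pd1 U) θ v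
        - (1/2) * ((pd1 U θ v)^2 + (pd1 V θ v)^2) + pd1 U θ v * pd1 M θ v) :
    (∀ θ v, pd2 H θ v = pd2 U θ v * H θ v)
    ∧ (∀ v₀, (∀ θ, H θ v₀ = 0) → ∀ θ v, H θ v = 0) := by
  have hM' : ContDiff ℝ (⊤ : ℕ∞) (unc M) := hM
  have hU' : ContDiff ℝ (⊤ : ℕ∞) (unc U) := hU
  have hV' : ContDiff ℝ (⊤ : ℕ∞) (unc V) := hV
  have hUt := contDiff_pd1 hU'
  have hUtt := contDiff_pd1 hUt
  have hVt := contDiff_pd1 hV'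
  have hMt := contDiff_pd1 hM'
  have hUv := contDiff_pd2 hU'
  -- the key mixed second derivative of `U_θθ`
  have key2 : ∀ θ v, pd2 (pd1 (pd1 U)) θ v
      = pd1 (pd1 U) θ v * pd2 U θ v + pd1 U θ v * (pd1 U θ v * pd2 U θ v) := by
    intro θ v
    rw [clairaut_s6 hUt]
    have heq : (fun t => pd2 (pd1 U) t v) = fun t => pd1 U t v * pd2 U t v :=
      funext fun t => e1 t v
    have d1 : HasDerivAt (fun t => pd1 U t v) (pd1 (pd1 U) θ v) θ := hasDerivAt_pd1 hUt θ v
    have d2 : HasDerivAt (fun t => pd2 U t v) (pd1 (pd2 U) θ v) θ := hasDerivAt_pd1 hUv θ v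
    have d3 : HasDerivAt (fun t => pd1 U t v * pd2 U t v) _ θ := d1.mul d2
    show deriv (fun t => pd2 (pd1 U) t v) θ = _
    rw [heq, d3.deriv, ← clairaut_s6 hU', e1]
  -- part 1
  have key1 : ∀ θ v, pd2 H θ v = pd2 U θ v * H θ v := by
    intro θ v
    have heq : (fun s => H θ s)
        = fun s => pd1 (pd1 U) θ s
            - (1/2) * ((pd1 U θ s)^2 + (pd1 V θ s)^2) + pd1 U θ s * pd1 M θ s :=
      funext fun s => hH θ s
    have dA : HasDerivAt (fun s => pd1 (pd1 U) θ s) (pd2 (pd1 (pd1 U)) θ v) v :=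
      hasDerivAt_pd2 hUtt θ v
    have dB : HasDerivAt (fun s => pd1 U θ s) (pd2 (pd1 U) θ v) v := hasDerivAt_pd2 hUt θ v
    have dC : HasDerivAt (fun s => pd1 V θ s) (pd2 (pd1 V) θ v) v := hasDerivAt_pd2 hVt θ v
    have dD : HasDerivAt (fun s => pd1 M θ s) (pd2 (pd1 M) θ v) v := hasDerivAt_pd2 hMt θ v
    have dE := ((dA.sub (((dB.pow 2).add (dC.pow 2)).const_mul (1/2))).add (dB.mul dD))
    have hd : pd2 H θ v
        = pd2 (pd1 (pd1 U)) θ v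
          - (1/2) * (2 * pd1 U θ v ^ 1 * pd2 (pd1 U) θ v
                    + 2 * pd1 V θ v ^ 1 * pd2 (pd1 V) θ v)
          + (pd2 (pd1 U) θ v * pd1 M θ v + pd1 U θ v * pd2 (pd1 M) θ v) := by
      show deriv (fun s => H θ s) v = _
      rw [heq]
      exact dE.deriv
    rw [hd, key2 θ v, e1, e2, e3, hH θ v]
    ring
  refine ⟨key1, ?_⟩
  intro v₀ h0 θ v
  -- differentiability of `s ↦ H θ s`
  have hdiff : ∀ s, HasDerivAt (fun s => H θ s) (pd2 H θ s) s := by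
    intro s
    have heq : (fun s => H θ s)
        = fun s => pd1 (pd1 U) θ s
            - (1/2) * ((pd1 U θ s)^2 + (pd1 V θ s)^2) + pd1 U θ s * pd1 M θ s :=
      funext fun s => hH θ s
    have dA : HasDerivAt (fun s' => pd1 (pd1 U) θ s') (pd2 (pd1 (pd1 U)) θ s) s :=
      hasDerivAt_pd2 hUtt θ s
    have dB : HasDerivAt (fun s' => pd1 U θ s') (pd2 (pd1 U) θ s) s := hasDerivAt_pd2 hUt θ s
    have dC : HasDerivAt (fun s' => pd1 V θ s') (pd2 (pd1 V) θ s) s := hasDerivAt_pd2 hVt θ s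
    have dD : HasDerivAt (fun s' => pd1 M θ s') (pd2 (pd1 M) θ s) s := hasDerivAt_pd2 hMt θ s
    have dE := ((dA.sub (((dB.pow 2).add (dC.pow 2)).const_mul (1/2))).add (dB.mul dD))
    have hdd : DifferentiableAt ℝ (fun s' => H θ s') s := by
      rw [heq]; exact dE.differentiableAt
    exact hdd.hasDerivAt
  have dg0 : ∀ s, HasDerivAt (fun s' => H θ s' * Real.exp (-(U θ s'))) 0 s := by
    intro s
    have dU : HasDerivAt (fun s' => U θ s') (pd2 U θ s) s := hasDerivAt_pd2 hU' θ s
    have h : HasDerivAt (fun s' => H θ s' * Real.exp (-(U θ s')))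
        (pd2 H θ s * Real.exp (-(U θ s)) + H θ s * (Real.exp (-(U θ s)) * -(pd2 U θ s))) s :=
      (hdiff s).mul ((dU.neg).exp)
    rw [key1 θ s] at h
    have hz : pd2 U θ s * H θ s * Real.exp (-(U θ s))
        + H θ s * (Real.exp (-(U θ s)) * -(pd2 U θ s)) = 0 := by ring
    rw [hz] at h
    exact h
  have hconst := is_const_of_deriv_eq_zero
    (fun s => (dg0 s).differentiableAt) (fun s => (dg0 s).deriv)
  have h1 : H θ v * Real.exp (-(U θ v)) = H θ v₀ * Real.exp (-(U θ v₀)) := hconst v v₀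
  rw [h0 θ, zero_mul] at h1
  have := Real.exp_ne_zero (-(U θ v))
  exact (mul_eq_zero.mp h1).resolve_right this
end
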